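/- Let v₀ ∈ ℝᵐ, let W be the rational envelope of v₀, let k = dim W + 1, and let U ⊆ W be an open subset (in the subspace topology of W) containing v₀. Then there exist affinely independent points v¹, …, v^k ∈ U ∩ ℚᵐ and real numbers a₁, …, a_k ∈ (0, 1] with ∑_{i=1}^{k} aᵢ = 1 and ∑_{i=1}^{k} aᵢ vⁱ = v₀; moreover, a₁, …, a_k are the unique real numbers summing to 1 with ∑ aᵢ vⁱ = v₀. -/

import Mathlib

open Finset

/-- A subset `W ⊆ ℝᵐ` is a rational affine subspace if it is the solution set of finitely many
affine equations with rational coefficients. -/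
def IsRatAffine (m : ℕ) (W : Set (Fin m → ℝ)) : Prop :=
  ∃ (s : ℕ) (q : Fin s → Fin m → ℚ) (c : Fin s → ℚ),
    W = {x : Fin m → ℝ | ∀ j : Fin s, (∑ i, (q j i : ℝ) * x i) = (c j : ℝ)}

/-- The rational envelope of `v₀ ∈ ℝᵐ`: the intersection of all rational affine subspaces of
`ℝᵐ` containing `v₀` (= the smallest such subspace). -/
def ratEnvelope (m : ℕ) (v₀ : Fin m → ℝ) : Set (Fin m → ℝ) :=
  {x : Fin m → ℝ | ∀ W : Set (Fin m → ℝ), IsRatAffine m W → v₀ ∈ W → x ∈ W}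

private lemma dot_cast_add (m : ℕ) (q1 q2 : Fin m → ℚ) (y : Fin m → ℝ) :
    ∑ i, ((q1 + q2) i : ℝ) * y i = (∑ i, (q1 i : ℝ) * y i) + ∑ i, (q2 i : ℝ) * y i := by
  rw [← Finset.sum_add_distrib]
  refine Finset.sum_congr rfl fun i _ => ?_
  push_cast [Pi.add_apply]
  ring

private lemma dot_cast_smul (m : ℕ) (t : ℚ) (q : Fin m → ℚ) (y : Fin m → ℝ) :
    ∑ i, ((t • q) i : ℝ) * y i = (t : ℝ) * ∑ i, (q i : ℝ) * y i := by
  rw [Finset.mul_sum]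
  refine Finset.sum_congr rfl fun i _ => ?_
  push_cast [Pi.smul_apply, smul_eq_mul]
  ring

/-- The rational constraints satisfied by `v₀`: rational vectors `q` such that `q · v₀ ∈ ℚ`. -/
def ratConstraints (m : ℕ) (v₀ : Fin m → ℝ) : Submodule ℚ (Fin m → ℚ) where
  carrier := {q | ∃ c : ℚ, ∑ i, (q i : ℝ) * v₀ i = (c : ℝ)}
  zero_mem' := ⟨0, by simp⟩
  add_mem' := by
    rintro a b ⟨c, hc⟩ ⟨d, hd⟩
    refine ⟨c + d, ?_⟩
    rw [dot_cast_add, hc, hd]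
    push_cast
    ring
  smul_mem' := by
    rintro t a ⟨c, hc⟩
    refine ⟨t * c, ?_⟩
    rw [dot_cast_smul, hc]
    push_cast
    ring

lemma ratEnvelope_eq (m : ℕ) (v₀ : Fin m → ℝ) :
    ratEnvelope m v₀ =
      {x | ∀ q ∈ ratConstraints m v₀, ∑ i, (q i : ℝ) * x i = ∑ i, (q i : ℝ) * v₀ i} := by
  ext x
  constructor
  · rintro hx q ⟨c, hc⟩
    have h1 : IsRatAffine m {y : Fin m → ℝ | ∀ j : Fin 1,
        (∑ i, (((fun _ : Fin 1 => q) j i : ℚ) : ℝ) * y i) = (((fun _ : Fin 1 => c) j : ℚ) : ℝ)} :=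
      ⟨1, fun _ => q, fun _ => c, rfl⟩
    have := hx _ h1 (fun _ => hc)
    rw [hc]
    exact this 0
  · rintro hx W ⟨s, qf, cf, rfl⟩ hv j
    have hq : qf j ∈ ratConstraints m v₀ := ⟨cf j, hv j⟩
    rw [← hv j]
    exact hx _ hq

set_option maxHeartbeats 1000000 in
/-- let `W` be the rational envelope of `v₀`, `k = dim W + 1`, and `U ⊆ W` an
open subset (in the subspace topology of `W`) containing `v₀`.  Then there are affinely
independent rational points `v¹, …, v^k ∈ U ∩ ℚᵐ` and reals `a₁, …, a_k ∈ (0,1]` with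
`∑ aᵢ = 1` and `∑ aᵢ vⁱ = v₀`; moreover the `aᵢ` are the unique reals summing to `1` with
`∑ aᵢ vⁱ = v₀`. -/
theorem exists_rational_affine_basis_in_open_subset (m : ℕ) (v₀ : Fin m → ℝ) (k : ℕ)
    (hk : k = Module.finrank ℝ (affineSpan ℝ (ratEnvelope m v₀)).direction + 1)
    (U : Set (Fin m → ℝ))
    (hUopen : ∃ V : Set (Fin m → ℝ), IsOpen V ∧ U = V ∩ ratEnvelope m v₀)
    (hv₀U : v₀ ∈ U) :
    ∃ v : Fin k → Fin m → ℝ,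
      (∀ i, v i ∈ U) ∧
      (∀ i, ∀ t : Fin m, ∃ r : ℚ, v i t = (r : ℝ)) ∧
      AffineIndependent ℝ v ∧
      ∃ a : Fin k → ℝ,
        (∀ i, a i ∈ Set.Ioc (0 : ℝ) 1) ∧
        (∑ i, a i) = 1 ∧
        (∑ i, a i • v i) = v₀ ∧
        ∀ a' : Fin k → ℝ, (∑ i, a' i) = 1 → (∑ i, a' i • v i) = v₀ → a' = a := by
  classical
  obtain ⟨V, hVopen, hUV⟩ := hUopen
  obtain ⟨Q1, hcompl⟩ := (ratConstraints m v₀).exists_isCompl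
  set r : ℕ := Module.finrank ℚ (ratConstraints m v₀) with hr
  set r' : ℕ := Module.finrank ℚ Q1 with hr'
  let b0 : Module.Basis (Fin r) ℚ (ratConstraints m v₀) := Module.finBasis ℚ _
  let b1 : Module.Basis (Fin r') ℚ Q1 := Module.finBasis ℚ _
  let bb : Module.Basis (Fin r ⊕ Fin r') ℚ (Fin m → ℚ) :=
    (b0.prod b1).map (Submodule.prodEquivOfIsCompl _ _ hcompl)
  have hbinl : ∀ j, bb (Sum.inl j) = (b0 j : Fin m → ℚ) := by
    intro j
    simp [bb, Module.Basis.map_apply, Submodule.coe_prodEquivOfIsCompl']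
  have hbmem : ∀ j, bb (Sum.inl j) ∈ ratConstraints m v₀ := by
    intro j; rw [hbinl]; exact (b0 j).2
  have hspan : ratConstraints m v₀ ≤
      Submodule.span ℚ (Set.range fun j => bb (Sum.inl j)) := by
    intro q hq
    have h1 : (Set.range fun j => bb (Sum.inl j)) =
        (ratConstraints m v₀).subtype '' Set.range b0 := by
      ext y
      constructor
      · rintro ⟨j, rfl⟩
        exact ⟨b0 j, ⟨j, rfl⟩, (hbinl j).symm⟩
      · rintro ⟨z, ⟨j, rfl⟩, rfl⟩
        exact ⟨j, hbinl j⟩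
    rw [h1, Submodule.span_image, b0.span_eq, Submodule.map_top, Submodule.range_subtype]
    exact hq
  -- matrices
  let std := Pi.basisFun ℚ (Fin m)
  let A : Matrix (Fin m) (Fin r ⊕ Fin r') ℚ := std.toMatrix bb
  let B : Matrix (Fin r ⊕ Fin r') (Fin m) ℚ := bb.toMatrix std
  have hAB : A * B = 1 := Module.Basis.toMatrix_mul_toMatrix_flip _ _
  have hBA : B * A = 1 := Module.Basis.toMatrix_mul_toMatrix_flip _ _
  let AR : Matrix (Fin r ⊕ Fin r') (Fin m) ℝ := (A.map (Rat.cast : ℚ → ℝ)).transpose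
  let BR : Matrix (Fin m) (Fin r ⊕ Fin r') ℝ := (B.map (Rat.cast : ℚ → ℝ)).transpose
  have hBRAR : BR * AR = 1 := by
    have h : (A.map (Rat.cast : ℚ → ℝ)) * (B.map (Rat.cast : ℚ → ℝ)) = 1 := by
      have h2 := (Matrix.map_mul (L := A) (M := B) (f := Rat.castHom ℝ)).symm
      rw [Rat.coe_castHom, hAB, Matrix.map_one _ (by norm_num) (by norm_num)] at h2
      exact h2
    calc BR * AR
        = ((A.map (Rat.cast : ℚ → ℝ)) * (B.map (Rat.cast : ℚ → ℝ))).transpose := by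
          rw [Matrix.transpose_mul]
      _ = 1 := by rw [h, Matrix.transpose_one]
  have hARBR : AR * BR = 1 := by
    have h : (B.map (Rat.cast : ℚ → ℝ)) * (A.map (Rat.cast : ℚ → ℝ)) = 1 := by
      have h2 := (Matrix.map_mul (L := B) (M := A) (f := Rat.castHom ℝ)).symm
      rw [Rat.coe_castHom, hBA, Matrix.map_one _ (by norm_num) (by norm_num)] at h2
      exact h2
    calc AR * BR
        = ((B.map (Rat.cast : ℚ → ℝ)) * (A.map (Rat.cast : ℚ → ℝ))).transpose := by
          rw [Matrix.transpose_mul]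
      _ = 1 := by rw [h, Matrix.transpose_one]
  let Lm : (Fin m → ℝ) →ₗ[ℝ] ((Fin r ⊕ Fin r') → ℝ) := Matrix.mulVecLin AR
  let Km : ((Fin r ⊕ Fin r') → ℝ) →ₗ[ℝ] (Fin m → ℝ) := Matrix.mulVecLin BR
  have hKL : ∀ y, Km (Lm y) = y := by
    intro y
    show BR.mulVec (AR.mulVec y) = y
    rw [Matrix.mulVec_mulVec, hBRAR, Matrix.one_mulVec]
  have hLK : ∀ y, Lm (Km y) = y := by
    intro y
    show AR.mulVec (BR.mulVec y) = y
    rw [Matrix.mulVec_mulVec, hARBR, Matrix.one_mulVec]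
  have hLinj : Function.Injective Lm := by
    intro x y h
    have h2 := congrArg Km h
    rwa [hKL, hKL] at h2
  have hL : ∀ (y : Fin m → ℝ) s, Lm y s = ∑ i, (bb s i : ℝ) * y i := by
    intro y s
    show AR.mulVec y s = _
    simp only [Matrix.mulVec, dotProduct, AR, Matrix.transpose_apply, Matrix.map_apply,
      A, Module.Basis.toMatrix_apply, std, Pi.basisFun_repr]
  -- membership characterization of the envelope
  have hWmem : ∀ x, x ∈ ratEnvelope m v₀ ↔
      ∀ j : Fin r, Lm x (Sum.inl j) = Lm v₀ (Sum.inl j) := by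
    intro x
    rw [ratEnvelope_eq]
    constructor
    · intro hx j
      rw [hL, hL]
      exact hx _ (hbmem j)
    · intro hx q hq
      have hq' := hspan hq
      clear hq
      induction hq' using Submodule.span_induction with
      | mem q' hq' =>
        obtain ⟨j, rfl⟩ := hq'
        rw [← hL, ← hL]
        exact hx j
      | zero => simp
      | add x1 x2 h1 h2 ih1 ih2 => rw [dot_cast_add, dot_cast_add, ih1, ih2]
      | smul t x1 h1 ih => rw [dot_cast_smul, dot_cast_smul, ih]
  -- the direction
  let N : Submodule ℝ (Fin m → ℝ) :=
    { carrier := {y | ∀ j : Fin r, Lm y (Sum.inl j) = 0}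
      zero_mem' := fun j => by rw [map_zero]; rfl
      add_mem' := fun {a b} ha hb j => by
        rw [map_add]
        show Lm a _ + Lm b _ = 0
        rw [ha j, hb j, add_zero]
      smul_mem' := fun t a ha j => by
        rw [map_smul]
        show t * Lm a _ = 0
        rw [ha j, mul_zero] }
  have hWN : ratEnvelope m v₀ = (AffineSubspace.mk' v₀ N : Set (Fin m → ℝ)) := by
    ext x
    rw [SetLike.mem_coe, AffineSubspace.mem_mk', hWmem x]
    constructor
    · intro h j
      show Lm (x - v₀) (Sum.inl j) = 0
      rw [map_sub]
      show Lm x (Sum.inl j) - Lm v₀ (Sum.inl j) = 0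
      rw [h j, sub_self]
    · intro h j
      have h2 : Lm (x - v₀) (Sum.inl j) = 0 := h j
      rw [map_sub] at h2
      have h3 : Lm x (Sum.inl j) - Lm v₀ (Sum.inl j) = 0 := h2
      linarith
  have hdir : (affineSpan ℝ (ratEnvelope m v₀)).direction = N := by
    rw [hWN, AffineSubspace.affineSpan_coe, AffineSubspace.direction_mk']
  -- finrank N = r'
  have hfin : Module.finrank ℝ N = r' := by
    let E : (Fin m → ℝ) ≃ₗ[ℝ] ((Fin r ⊕ Fin r') → ℝ) :=
      LinearEquiv.ofLinear Lm Km (LinearMap.ext hLK) (LinearMap.ext hKL)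
    let N₂ : Submodule ℝ ((Fin r ⊕ Fin r') → ℝ) :=
      { carrier := {z | ∀ j : Fin r, z (Sum.inl j) = 0}
        zero_mem' := fun j => rfl
        add_mem' := fun {a b} ha hb j => by
          show a _ + b _ = 0
          rw [ha j, hb j, add_zero]
        smul_mem' := fun t a ha j => by
          show t * a _ = 0
          rw [ha j, mul_zero] }
    have hmap : N.map (E : (Fin m → ℝ) →ₗ[ℝ] ((Fin r ⊕ Fin r') → ℝ)) = N₂ := by
      ext z
      simp only [Submodule.mem_map]
      constructor
      · rintro ⟨y, hy, rfl⟩ j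
        exact hy j
      · intro hz
        refine ⟨Km z, fun j => ?_, hLK z⟩
        show Lm (Km z) (Sum.inl j) = 0
        rw [hLK]
        exact hz j
    have h1 : Module.finrank ℝ N₂ = Module.finrank ℝ N := by
      rw [← hmap]
      exact LinearEquiv.finrank_map_eq E N
    let e2 : N₂ ≃ₗ[ℝ] (Fin r' → ℝ) :=
      { toFun := fun z => fun j => z.1 (Sum.inr j)
        invFun := fun u => ⟨Sum.elim 0 u, fun j => rfl⟩
        map_add' := fun a b => rfl
        map_smul' := fun t a => rfl
        left_inv := fun z => by
          apply Subtype.ext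
          funext s
          cases s with
          | inl j => exact (z.2 j).symm
          | inr j => rfl
        right_inv := fun u => rfl }
    rw [← h1, e2.finrank_eq]
    simp [Module.finrank_pi]
  rw [hdir, hfin] at hk
  subst hk
  -- the continuous parametrization
  have hv₀V : v₀ ∈ V := by rw [hUV] at hv₀U; exact hv₀U.1
  let cc : Fin r → ℝ := fun j => Lm v₀ (Sum.inl j)
  have hccrat : ∀ j, ∃ c : ℚ, cc j = (c : ℝ) := by
    intro j
    obtain ⟨c, hc⟩ := hbmem j
    refine ⟨c, ?_⟩
    show Lm v₀ (Sum.inl j) = (c : ℝ)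
    rw [hL]
    exact hc
  let z₀ : Fin r' → ℝ := fun j => Lm v₀ (Sum.inr j)
  have helim : Sum.elim cc z₀ = Lm v₀ := by
    funext s; cases s <;> rfl
  let g : (Fin r' → ℝ) → (Fin m → ℝ) := fun z => Km (Sum.elim cc z)
  have hgz₀ : g z₀ = v₀ := by
    show Km (Sum.elim cc z₀) = v₀
    rw [helim, hKL]
  have hgcont : Continuous g := by
    have h1 : Continuous (fun z : Fin r' → ℝ => (Sum.elim cc z : (Fin r ⊕ Fin r') → ℝ)) := by
      apply continuous_pi
      rintro (j | j)
      · exact continuous_const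
      · exact continuous_apply j
    exact Km.continuous_of_finiteDimensional.comp h1
  obtain ⟨η, hη0, hηV⟩ : ∃ η > 0, ∀ z, dist z z₀ < η → g z ∈ V := by
    have hopen : IsOpen (g ⁻¹' V) := hVopen.preimage hgcont
    have hz₀ : z₀ ∈ g ⁻¹' V := by
      simp only [Set.mem_preimage, hgz₀]
      exact hv₀V
    obtain ⟨η, hη0, hball⟩ := Metric.isOpen_iff.mp hopen z₀ hz₀
    exact ⟨η, hη0, fun z hz => hball (by rwa [Metric.mem_ball])⟩
  obtain ⟨ε, hε0, hεη⟩ : ∃ ε : ℚ, 0 < (ε : ℝ) ∧ (ε : ℝ) < η / 2 := by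
    obtain ⟨ε, h1, h2⟩ := exists_rat_btwn (by linarith : (0:ℝ) < η / 2)
    exact ⟨ε, h1, h2⟩
  set δ : ℝ := (ε : ℝ) / (2 * ((r' : ℝ) + 1)) with hδ
  have hδ0 : 0 < δ := by positivity
  have hδε : δ ≤ (ε : ℝ) / 2 := by
    rw [hδ]
    apply div_le_div_of_nonneg_left (le_of_lt hε0) (by norm_num)
    have : (0:ℝ) ≤ (r' : ℝ) := Nat.cast_nonneg r'
    linarith
  have hp : ∀ j : Fin r', ∃ p : ℚ, z₀ j - δ < (p : ℝ) ∧ (p : ℝ) < z₀ j := by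
    intro j
    exact exists_rat_btwn (by linarith : z₀ j - δ < z₀ j)
  choose p hp1 hp2 using hp
  set d : Fin r' → ℝ := fun j => z₀ j - (p j : ℝ) with hdd
  have hd0 : ∀ j, 0 < d j := fun j => by
    show 0 < z₀ j - (p j : ℝ)
    linarith [hp2 j]
  have hdδ : ∀ j, d j < δ := fun j => by
    show z₀ j - (p j : ℝ) < δ
    linarith [hp1 j]
  -- the simplex vertices
  let w : Fin (r' + 1) → Fin r' → ℝ :=
    fun i j => (p j : ℝ) + if (i : ℕ) = (j : ℕ) + 1 then (ε : ℝ) else 0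
  have hw : ∀ i j, w i j = (p j : ℝ) + if (i : ℕ) = (j : ℕ) + 1 then (ε : ℝ) else 0 :=
    fun i j => rfl
  let v : Fin (r' + 1) → Fin m → ℝ := fun i => g (w i)
  have hLv : ∀ i, Lm (v i) = Sum.elim cc (w i) := fun i => hLK _
  have hwz₀ : ∀ i, dist (w i) z₀ < η := by
    intro i
    rw [dist_pi_lt_iff hη0]
    intro j
    rw [Real.dist_eq]
    have hdj := hd0 j
    have hdj2 := hdδ j
    have heq : w i j - z₀ j = -(d j) + (if (i : ℕ) = (j : ℕ) + 1 then (ε : ℝ) else 0) := by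
      rw [hw]
      show _ = -(z₀ j - (p j : ℝ)) + _
      ring
    rw [heq]
    split <;> rw [abs_lt] <;> constructor <;> linarith
  -- the coefficients
  let a : Fin (r' + 1) → ℝ := Fin.cases (1 - ∑ j, d j / (ε : ℝ)) (fun j => d j / (ε : ℝ))
  have ha0 : a 0 = 1 - ∑ j, d j / (ε : ℝ) := Fin.cases_zero
  have has : ∀ j, a j.succ = d j / (ε : ℝ) := fun j => Fin.cases_succ j
  have hterm : ∀ j, d j / (ε : ℝ) ≤ 1 / (2 * ((r' : ℝ) + 1)) := by
    intro j
    rw [div_le_div_iff₀ hε0 (by positivity)]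
    have h1 : d j * (2 * ((r' : ℝ) + 1)) < (ε : ℝ) := by
      rw [← lt_div_iff₀ (by positivity)]
      exact hdδ j
    linarith
  have hS0 : 0 ≤ ∑ j, d j / (ε : ℝ) :=
    Finset.sum_nonneg fun j _ => le_of_lt (div_pos (hd0 j) hε0)
  have hS1 : (∑ j, d j / (ε : ℝ)) < 1 := by
    calc (∑ j, d j / (ε : ℝ)) ≤ ∑ _j : Fin r', 1 / (2 * ((r' : ℝ) + 1)) :=
          Finset.sum_le_sum fun j _ => hterm j
      _ = (r' : ℝ) * (1 / (2 * ((r' : ℝ) + 1))) := by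
          rw [Finset.sum_const, Finset.card_univ, Fintype.card_fin, nsmul_eq_mul]
      _ < 1 := by
          rw [mul_one_div, div_lt_one (by positivity)]
          linarith
  have hasum : (∑ i, a i) = 1 := by
    rw [Fin.sum_univ_succ, ha0]
    simp only [has]
    ring
  -- sum evaluation lemma
  have hLsum : ∀ t : Fin (r' + 1) → ℝ, (∑ i, t i) = 1 →
      Lm (∑ i, t i • v i) = Sum.elim cc (fun j => (p j : ℝ) + t j.succ * (ε : ℝ)) := by
    intro t ht
    rw [map_sum]
    funext s
    rw [Finset.sum_apply]
    simp only [map_smul, Pi.smul_apply, smul_eq_mul]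
    have hv : ∀ i, Lm (v i) s = Sum.elim cc (w i) s := fun i => by rw [hLv]
    rw [Finset.sum_congr rfl fun i _ => by rw [hv i]]
    cases s with
    | inl j =>
      simp only [Sum.elim_inl]
      rw [← Finset.sum_mul, ht, one_mul]
    | inr j =>
      simp only [Sum.elim_inr]
      have hterm2 : ∀ i, t i * w i j
          = t i * (p j : ℝ) + t i * (if (i : ℕ) = (j : ℕ) + 1 then (ε : ℝ) else 0) := by
        intro i
        rw [hw]
        ring
      rw [Finset.sum_congr rfl fun i _ => hterm2 i, Finset.sum_add_distrib, ← Finset.sum_mul,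
        ht, one_mul]
      congr 1
      rw [Finset.sum_eq_single j.succ]
      · rw [if_pos (Fin.val_succ j)]
      · intro b _ hb
        rw [if_neg, mul_zero]
        intro hbeq
        exact hb (Fin.val_injective (by rw [hbeq, Fin.val_succ]))
      · intro h
        exact absurd (Finset.mem_univ _) h
  refine ⟨v, ?_, ?_, ?_, ?_⟩
  · -- v i ∈ U
    intro i
    rw [hUV]
    refine ⟨hηV _ (hwz₀ i), (hWmem _).mpr fun j => ?_⟩
    rw [hLv i]
    rfl
  · -- rationality
    intro i t
    have hy : ∀ s, ∃ ρ : ℚ, Sum.elim cc (w i) s = (ρ : ℝ) := by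
      rintro (j | j)
      · exact hccrat j
      · refine ⟨p j + if (i : ℕ) = (j : ℕ) + 1 then ε else 0, ?_⟩
        show (p j : ℝ) + _ = _
        push_cast
        split <;> simp
    choose ρ hρ using hy
    refine ⟨∑ s, B s t * ρ s, ?_⟩
    show Km (Sum.elim cc (w i)) t = _
    have h1 : Km (Sum.elim cc (w i)) t = ∑ s, (B s t : ℝ) * (ρ s : ℝ) := by
      show BR.mulVec _ t = _
      simp only [Matrix.mulVec, dotProduct, BR, Matrix.transpose_apply, Matrix.map_apply]
      exact Finset.sum_congr rfl fun s _ => by rw [hρ s]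
    rw [h1]
    push_cast
    rfl
  · -- affine independence
    have hyind : AffineIndependent ℝ (fun i => Sum.elim cc (w i)) := by
      rw [affineIndependent_iff_linearIndependent_vsub ℝ _ 0]
      rw [Fintype.linearIndependent_iff]
      intro gcoef hg x
      have hxne : ((x : Fin (r' + 1)) : ℕ) ≠ 0 := fun h => x.2 (Fin.val_injective h)
      have hxlt : ((x : Fin (r' + 1)) : ℕ) < r' + 1 := (x : Fin (r' + 1)).isLt
      set j : Fin r' := ⟨((x : Fin (r' + 1)) : ℕ) - 1, by omega⟩ with hj
      have hxval : ((x : Fin (r' + 1)) : ℕ) = (j : ℕ) + 1 := by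
        rw [hj]
        show _ = _ - 1 + 1
        omega
      have key := congrFun hg (Sum.inr j)
      rw [Finset.sum_apply] at key
      simp only [Pi.smul_apply, smul_eq_mul, Pi.zero_apply] at key
      have hval : ∀ x' : {y : Fin (r' + 1) // y ≠ 0},
          (Sum.elim cc (w (x' : Fin (r' + 1))) -ᵥ Sum.elim cc (w 0)) (Sum.inr j)
          = (if ((x' : Fin (r' + 1)) : ℕ) = (j : ℕ) + 1 then (ε : ℝ) else 0) := by
        intro x'
        show w (x' : Fin (r' + 1)) j - w 0 j = _
        rw [hw, hw]
        rw [if_neg (by simp : ¬ ((0 : Fin (r' + 1)) : ℕ) = (j : ℕ) + 1)]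
        ring
      rw [Finset.sum_congr rfl fun x' _ => by rw [hval x']] at key
      rw [Finset.sum_eq_single x] at key
      · rw [if_pos hxval] at key
        exact (mul_eq_zero.mp key).resolve_right (ne_of_gt hε0)
      · intro b _ hb
        rw [if_neg, mul_zero]
        intro hbeq
        exact hb (Subtype.ext (Fin.val_injective (by rw [hbeq, hxval])))
      · intro h
        exact absurd (Finset.mem_univ _) h
    refine AffineIndependent.of_comp Lm.toAffineMap ?_
    have hcomp : (⇑Lm.toAffineMap ∘ v) = fun i => Sum.elim cc (w i) := by
      funext i
      show Lm (v i) = _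
      exact hLv i
    rw [hcomp]
    exact hyind
  · -- coefficients
    refine ⟨a, ?_, hasum, ?_, ?_⟩
    · intro i
      refine Fin.cases ?_ (fun j => ?_) i
      · rw [ha0]
        constructor
        · linarith
        · linarith
      · rw [has]
        constructor
        · exact div_pos (hd0 j) hε0
        · have h1 := hterm j
          have h2 : 1 / (2 * ((r' : ℝ) + 1)) ≤ 1 := by
            rw [div_le_one (by positivity)]
            have : (0:ℝ) ≤ (r' : ℝ) := Nat.cast_nonneg r'
            linarith
          linarith
    · -- sum = v₀
      apply hLinj
      rw [hLsum a hasum, ← helim]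
      funext s
      cases s with
      | inl j => rfl
      | inr j =>
        simp only [Sum.elim_inr]
        rw [has, div_mul_cancel₀ _ (ne_of_gt hε0)]
        show (p j : ℝ) + (z₀ j - (p j : ℝ)) = z₀ j
        ring
    · -- uniqueness
      intro a' ha'sum ha'eq
      have h1 := hLsum a' ha'sum
      rw [ha'eq, ← helim] at h1
      have h2 : ∀ j : Fin r', a' j.succ = a j.succ := by
        intro j
        have h3 := congrFun h1 (Sum.inr j)
        simp only [Sum.elim_inr] at h3
        rw [has]
        have hdj : d j = z₀ j - (p j : ℝ) := rfl
        rw [eq_div_iff (ne_of_gt hε0), hdj]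
        linarith
      funext i
      refine Fin.cases ?_ (fun j => h2 j) i
      have e1 : a' 0 + ∑ j : Fin r', a' j.succ = 1 := by
        rw [← Fin.sum_univ_succ]
        exact ha'sum
      have e2 : ∑ j : Fin r', a' j.succ = ∑ j, d j / (ε : ℝ) :=
        Finset.sum_congr rfl fun j _ => by rw [h2 j, has]
      rw [ha0]
      linarith
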